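/- Let q₁, q₂ be real numbers with q₁ > 0, q₂ > 0 and Δ₋ ≥ 0, and let Q(w) = ((w+q₁)(w+q₂))² − 4w². Then the derivative of Q satisfies Q'(w₂) = 2√Δ₊ · Λ(w₂) and Q'(w₃) = −2√Δ₋ · Λ(w₃), where Λ(w) = (w+q₁)(w+q₂). (These identities encode the conical deficit angles Δ± of the spindle metric at its two poles w₂ and w₃.) -/

import Mathlib

lemma derivQ (q₁ q₂ w : ℝ) :
    deriv (fun w : ℝ => ((w + q₁) * (w + q₂)) ^ 2 - 4 * w ^ 2) w =
      2 * ((w + q₁) * (w + q₂)) * (2 * w + q₁ + q₂) - 8 * w := by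
  have h1 : HasDerivAt (fun w : ℝ => w + q₁) 1 w := (hasDerivAt_id w).add_const q₁
  have h2 : HasDerivAt (fun w : ℝ => w + q₂) 1 w := (hasDerivAt_id w).add_const q₂
  have h3 : HasDerivAt (fun w : ℝ => ((w + q₁) * (w + q₂)) ^ 2)
      (2 * ((w + q₁) * (w + q₂)) ^ 1 * (1 * (w + q₂) + (w + q₁) * 1)) w :=
    (h1.mul h2).pow 2
  have h4 : HasDerivAt (fun w : ℝ => 4 * w ^ 2) (4 * (2 * w ^ 1)) w :=
    (hasDerivAt_pow 2 w).const_mul 4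
  have h5 : deriv (fun w : ℝ => ((w + q₁) * (w + q₂)) ^ 2 - 4 * w ^ 2) w = _ := (h3.sub h4).deriv
  rw [h5]; ring

/-- The derivative of `Q(w) = ((w+q₁)(w+q₂))² − 4w²` at the two poles `w₂, w₃`
of the spindle: `Q'(w₂) = 2√Δ₊ Λ(w₂)` and `Q'(w₃) = −2√Δ₋ Λ(w₃)`, encoding the
conical deficit angles `Δ±`. -/
theorem spindle_deriv_at_poles (q₁ q₂ : ℝ) (hq₁ : 0 < q₁) (hq₂ : 0 < q₂)
    (hΔm : 0 ≤ 4 - 4 * (q₁ + q₂) + (q₁ - q₂) ^ 2)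
    (w₂ w₃ : ℝ)
    (hw₂ : w₂ = (-2 - (q₁ + q₂) + Real.sqrt (4 + 4 * (q₁ + q₂) + (q₁ - q₂) ^ 2)) / 2)
    (hw₃ : w₃ = (2 - (q₁ + q₂) - Real.sqrt (4 - 4 * (q₁ + q₂) + (q₁ - q₂) ^ 2)) / 2) :
    deriv (fun w : ℝ => ((w + q₁) * (w + q₂)) ^ 2 - 4 * w ^ 2) w₂ =
      2 * Real.sqrt (4 + 4 * (q₁ + q₂) + (q₁ - q₂) ^ 2) * ((w₂ + q₁) * (w₂ + q₂)) ∧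
    deriv (fun w : ℝ => ((w + q₁) * (w + q₂)) ^ 2 - 4 * w ^ 2) w₃ =
      -(2 * Real.sqrt (4 - 4 * (q₁ + q₂) + (q₁ - q₂) ^ 2)) * ((w₃ + q₁) * (w₃ + q₂)) := by
  set s := Real.sqrt (4 + 4 * (q₁ + q₂) + (q₁ - q₂) ^ 2) with hsdef
  set r := Real.sqrt (4 - 4 * (q₁ + q₂) + (q₁ - q₂) ^ 2) with hrdef
  have hΔp : (0:ℝ) ≤ 4 + 4 * (q₁ + q₂) + (q₁ - q₂) ^ 2 := by nlinarith
  have hs : s ^ 2 = 4 + 4 * (q₁ + q₂) + (q₁ - q₂) ^ 2 := Real.sq_sqrt hΔp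
  have hr : r ^ 2 = 4 - 4 * (q₁ + q₂) + (q₁ - q₂) ^ 2 := Real.sq_sqrt hΔm
  have hL₂ : (w₂ + q₁) * (w₂ + q₂) = -2 * w₂ := by
    subst hw₂; linear_combination (1/4) * hs
  have hL₃ : (w₃ + q₁) * (w₃ + q₂) = 2 * w₃ := by
    subst hw₃; linear_combination (1/4) * hr
  constructor
  · rw [derivQ, hL₂]
    subst hw₂; ring
  · rw [derivQ, hL₃]
    subst hw₃; ring
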